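/- arXiv:math/0701262 — 2 statements merged into one kernel-verified Lean document; each statement's English description precedes it below -/
import Mathlib

section
/- The function f(x) = x² (1−x²) K(x) K(√(1−x²)) is increasing on (0, 1/√2] and decreasing on [1/√2, 1), where K is the complete elliptic integral of the first kind; in particular its maximum on (0,1) is (1/4)K(1/√2)². -/
/-- The rising factorial (Pochhammer symbol) `(a)ₙ = a(a+1)⋯(a+n−1)`. -/
def ascFac (a : ℝ) : ℕ → ℝ
  | 0 => 1
  | n + 1 => ascFac a n * (a + n)

/-- The Gaussian hypergeometric function `₂F₁(a,b;c;x) = Σ (a)ₙ(b)ₙ/((c)ₙ n!) xⁿ`. -/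
noncomputable def hyperF (a b c x : ℝ) : ℝ :=
  ∑' n : ℕ, ascFac a n * ascFac b n / (ascFac c n * n.factorial) * x ^ n

/-- The complete elliptic integral of the first kind,
`K(x) = (π/2)·₂F₁(1/2,1/2;1;x²)`. -/
noncomputable def ellipticK (x : ℝ) : ℝ := Real.pi / 2 * hyperF (1/2) (1/2) 1 (x ^ 2)

lemma ascFac_one : ∀ n : ℕ, ascFac 1 n = n.factorial
  | 0 => by simp [ascFac]
  | n + 1 => by
      rw [ascFac, ascFac_one n, Nat.factorial_succ]
      push_cast; ring

lemma ascFac_half_pos : ∀ n : ℕ, 0 < ascFac (1/2) n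
  | 0 => by norm_num [ascFac]
  | n + 1 => by
      rw [ascFac]
      have := ascFac_half_pos n
      positivity

lemma ascFac_half_le : ∀ n : ℕ, ascFac (1/2) n ≤ n.factorial
  | 0 => by norm_num [ascFac]
  | n + 1 => by
      rw [ascFac, Nat.factorial_succ]
      push_cast
      have h1 := ascFac_half_le n
      have h2 := (ascFac_half_pos n).le
      have h3 : (0:ℝ) < 1/2 + n := by positivity
      calc ascFac (1/2) n * (1/2 + n) ≤ (n.factorial : ℝ) * ((n:ℝ)+1) := by
            apply mul_le_mul h1 (by linarith) h3.le (by positivity)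
        _ = ((n:ℝ)+1) * n.factorial := by ring

lemma abs_ascFac_neg_half_le : ∀ n : ℕ, |ascFac (-(1/2)) n| ≤ n.factorial
  | 0 => by norm_num [ascFac]
  | n + 1 => by
      rw [ascFac, Nat.factorial_succ, abs_mul]
      push_cast
      have h1 := abs_ascFac_neg_half_le n
      have h4 : |(-(1:ℝ)/2) + n| ≤ (n:ℝ) + 1 := by
        rw [abs_le]; constructor <;> [nlinarith [Nat.cast_nonneg (α := ℝ) n]; nlinarith [Nat.cast_nonneg (α := ℝ) n]]
      calc |ascFac (-(1/2)) n| * |(-(1/2):ℝ) + n| ≤ (n.factorial : ℝ) * ((n:ℝ)+1) := by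
            apply mul_le_mul h1 (by rw [abs_le]; constructor <;> nlinarith [Nat.cast_nonneg (α := ℝ) n]) (abs_nonneg _) (by positivity)
        _ = ((n:ℝ)+1) * n.factorial := by ring

lemma neg_half_rel : ∀ n : ℕ, (2*(n:ℝ) - 1) * ascFac (-(1/2)) n = - ascFac (1/2) n
  | 0 => by norm_num [ascFac]
  | n + 1 => by
      have ih := neg_half_rel n
      rw [ascFac, ascFac]
      push_cast
      nlinarith [ih]

noncomputable def cc (n : ℕ) : ℝ := (ascFac (1/2) n / n.factorial)^2
noncomputable def dd (n : ℕ) : ℝ := ascFac (-(1/2)) n * ascFac (1/2) n / (n.factorial : ℝ)^2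

lemma cc_pos (n : ℕ) : 0 < cc n := by
  have := ascFac_half_pos n
  have : (0:ℝ) < n.factorial := by positivity
  unfold cc
  positivity

lemma cc_le_one (n : ℕ) : cc n ≤ 1 := by
  unfold cc
  rw [div_pow]
  have h1 : (0:ℝ) < ((n.factorial:ℝ))^2 := by positivity
  rw [div_le_one h1]
  have := ascFac_half_le n
  have := (ascFac_half_pos n).le
  nlinarith

lemma abs_dd_le_one (n : ℕ) : |dd n| ≤ 1 := by
  unfold dd
  have h1 : (0:ℝ) < ((n.factorial:ℝ))^2 := by positivity
  rw [abs_div, abs_mul, abs_of_pos h1, div_le_one h1]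
  have h2 := abs_ascFac_neg_half_le n
  have h3 : |ascFac (1/2) n| ≤ (n.factorial:ℝ) := by
    rw [abs_of_pos (ascFac_half_pos n)]; exact ascFac_half_le n
  calc |ascFac (-(1/2)) n| * |ascFac (1/2) n| ≤ (n.factorial:ℝ) * (n.factorial:ℝ) :=
        mul_le_mul h2 h3 (abs_nonneg _) (by positivity)
    _ = ((n.factorial:ℝ))^2 := by ring

lemma dd_zero : dd 0 = 1 := by norm_num [dd, ascFac]

lemma cc_zero : cc 0 = 1 := by norm_num [cc, ascFac]

lemma dd_nonpos (n : ℕ) (hn : 1 ≤ n) : dd n ≤ 0 := by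
  have h := neg_half_rel n
  have h2 : (0:ℝ) < 2*(n:ℝ) - 1 := by
    have : (1:ℝ) ≤ n := by exact_mod_cast hn
    linarith
  have h3 : ascFac (-(1/2)) n = - ascFac (1/2) n / (2*(n:ℝ)-1) := by
    field_simp
    linarith [h]
  unfold dd
  rw [h3]
  have := ascFac_half_pos n
  have hf : (0:ℝ) < ((n.factorial:ℝ))^2 := by positivity
  apply div_nonpos_of_nonpos_of_nonneg _ hf.le
  apply mul_nonpos_of_nonpos_of_nonneg _ this.le
  apply div_nonpos_of_nonpos_of_nonneg (by linarith) h2.le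

/-- key contiguous relation on coefficients: `d_m + (2m-1) c_{m-1} = (2m+1) c_m` for `m ≥ 1` -/
lemma coeff_rel (m : ℕ) : dd (m+1) + (2*((m:ℝ)+1) - 1) * cc m = (2*((m:ℝ)+1) + 1) * cc (m+1) := by
  have h := neg_half_rel (m+1)
  have h2 : (0:ℝ) < 2*((m:ℝ)+1) - 1 := by
    have : (0:ℝ) ≤ m := Nat.cast_nonneg m
    linarith
  have h3 : ascFac (-(1/2)) (m+1) = - ascFac (1/2) (m+1) / (2*((m:ℝ)+1)-1) := by
    field_simp
    push_cast at h
    linarith [h]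
  unfold dd cc
  rw [h3, show ascFac (1/2) (m+1) = ascFac (1/2) m * (1/2 + m) from rfl,
     Nat.factorial_succ]
  have hf : ((m.factorial:ℝ)) ≠ 0 := by positivity
  have hm : ((m:ℝ)+1) ≠ 0 := by positivity
  push_cast
  field_simp
  ring

noncomputable def kk (u : ℝ) : ℝ := ∑' n, cc n * u ^ n
noncomputable def ee (u : ℝ) : ℝ := ∑' n, dd n * u ^ n
noncomputable def DD (u : ℝ) : ℝ := ∑' n : ℕ, ((n:ℝ)+1) * cc (n+1) * u ^ n

lemma summable_aux {a : ℕ → ℝ} {u : ℝ} (ha : ∀ n, |a n| ≤ (n:ℝ)+1) (hu : |u| < 1) :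
    Summable (fun n => a n * u ^ n) := by
  have h1 : Summable (fun n : ℕ => ((n:ℝ)+1) * |u| ^ n) := by
    have h2 : Summable (fun n : ℕ => ((n:ℝ))^1 * |u| ^ n) :=
      summable_pow_mul_geometric_of_norm_lt_one 1 (by simpa using hu)
    have h3 : Summable (fun n : ℕ => |u| ^ n) := summable_geometric_of_lt_one (abs_nonneg u) hu
    simpa [add_mul, pow_one] using h2.add h3
  apply Summable.of_norm_bounded h1
  intro n
  rw [norm_mul, norm_pow]
  have : ‖u‖ = |u| := rfl
  rw [this]
  apply mul_le_mul_of_nonneg_right _ (by positivity)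
  exact ha n

lemma abs_cc_bound (n : ℕ) : |cc n| ≤ (n:ℝ)+1 := by
  rw [abs_of_pos (cc_pos n)]
  have := cc_le_one n
  have : (0:ℝ) ≤ n := Nat.cast_nonneg n
  linarith [cc_le_one n]

lemma abs_dd_bound (n : ℕ) : |dd n| ≤ (n:ℝ)+1 := by
  have := abs_dd_le_one n
  have : (0:ℝ) ≤ n := Nat.cast_nonneg n
  linarith [abs_dd_le_one n]

lemma abs_DD_bound (n : ℕ) : |((n:ℝ)+1) * cc (n+1)| ≤ (n:ℝ)+1 := by
  rw [abs_mul, abs_of_nonneg (by positivity : (0:ℝ) ≤ (n:ℝ)+1),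
    abs_of_pos (cc_pos (n+1))]
  nlinarith [cc_le_one (n+1), cc_pos (n+1), Nat.cast_nonneg (α := ℝ) n]

lemma hasSum_kk {u : ℝ} (hu : |u| < 1) : HasSum (fun n => cc n * u ^ n) (kk u) :=
  (summable_aux abs_cc_bound hu).hasSum

lemma hasSum_ee {u : ℝ} (hu : |u| < 1) : HasSum (fun n => dd n * u ^ n) (ee u) :=
  (summable_aux abs_dd_bound hu).hasSum

lemma hasSum_DD {u : ℝ} (hu : |u| < 1) :
    HasSum (fun n : ℕ => ((n:ℝ)+1) * cc (n+1) * u ^ n) (DD u) :=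
  (summable_aux abs_DD_bound hu).hasSum

lemma hasDerivAt_kk {u : ℝ} (hu : |u| < 1) : HasDerivAt kk (DD u) u := by
  obtain ⟨r, hr1, hr2⟩ := exists_between hu
  have hr0 : 0 < r := lt_of_le_of_lt (abs_nonneg u) hr1
  have hb : Summable (fun n : ℕ => (n:ℝ) * r ^ (n-1)) := by
    have h2 : Summable (fun n : ℕ => ((n:ℝ))^1 * r ^ n) :=
      summable_pow_mul_geometric_of_norm_lt_one 1 (by
        rw [Real.norm_eq_abs, abs_of_pos hr0]; exact hr2)
    have h3 := h2.mul_left (1/r)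
    apply h3.congr
    intro n
    cases n with
    | zero => simp
    | succ m =>
      field_simp
      simp only [Nat.add_sub_cancel]
      rw [pow_succ]
      ring
  have bound : ∀ (n : ℕ) (y : ℝ), |y| ≤ r → ‖cc n * ((n:ℝ) * y ^ (n-1))‖ ≤ (n:ℝ) * r ^ (n-1) := by
    intro n y hyr
    rw [Real.norm_eq_abs, abs_mul, abs_mul]
    have h1 : |cc n| ≤ 1 := by
      rw [abs_of_pos (cc_pos n)]; exact cc_le_one n
    have h2 : |y ^ (n-1)| ≤ r ^ (n-1) := by
      rw [abs_pow]
      exact pow_le_pow_left₀ (abs_nonneg y) hyr _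
    calc |cc n| * (|(n:ℝ)| * |y ^ (n-1)|) ≤ 1 * ((n:ℝ) * r ^ (n-1)) := by
          apply mul_le_mul h1 _ (by positivity) one_pos.le
          apply mul_le_mul (le_of_eq (abs_of_nonneg (Nat.cast_nonneg n))) h2
            (abs_nonneg _) (Nat.cast_nonneg n)
      _ = (n:ℝ) * r ^ (n-1) := one_mul _
  have hmem : u ∈ Set.Ioo (-r) r := by
    constructor
    · linarith [neg_abs_le u]
    · linarith [le_abs_self u]
  have key : HasDerivAt (fun y => ∑' n, cc n * y ^ n)
      (∑' n, cc n * ((n:ℝ) * u ^ (n-1))) u := by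
    apply hasDerivAt_tsum_of_isPreconnected hb (isOpen_Ioo (a := -r) (b := r))
      (convex_Ioo _ _).isPreconnected
      (g := fun n y => cc n * y ^ n) (g' := fun n y => cc n * ((n:ℝ) * y ^ (n-1)))
      (y₀ := u)
    · intro n y _
      exact (hasDerivAt_pow n y).const_mul (cc n)
    · intro n y hy
      exact bound n y (by rw [abs_le]; exact ⟨hy.1.le, hy.2.le⟩)
    · exact hmem
    · exact summable_aux abs_cc_bound hu
    · exact hmem
  have hsum : Summable (fun n : ℕ => cc n * ((n:ℝ) * u ^ (n-1))) := by
    apply Summable.of_norm_bounded hb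
    intro n
    exact bound n u (by rw [abs_le]; exact ⟨hmem.1.le, hmem.2.le⟩)
  have heq : (∑' n, cc n * ((n:ℝ) * u ^ (n-1))) = DD u := by
    rw [hsum.tsum_eq_zero_add]
    simp only [Nat.cast_zero, zero_mul, mul_zero, zero_add, Nat.add_sub_cancel]
    unfold DD
    exact tsum_congr fun n => by push_cast; ring
  rw [← heq]
  exact key

lemma ee_identity {u : ℝ} (hu : |u| < 1) :
    ee u = (1-u) * kk u + 2*u*(1-u) * DD u := by
  have h1 := hasSum_kk hu
  have hDD := hasSum_DD hu
  set B : ℕ → ℝ := fun n => if n = 0 then 0 else cc (n-1) * u^n with hBdef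
  have hB : HasSum B (u * kk u) := by
    have h2 : HasSum (fun n : ℕ => B (n+1)) (u * kk u) := by
      have h3 := h1.mul_left u
      have he : (fun n : ℕ => u * (cc n * u ^ n)) = fun n : ℕ => B (n+1) := by
        funext n
        simp only [hBdef, Nat.add_sub_cancel, if_neg (Nat.succ_ne_zero n)]
        ring
      rwa [he] at h3
    have h4 := (hasSum_nat_add_iff (f := B) 1).mp h2
    simpa [hBdef] using h4
  set G : ℕ → ℝ := fun n => (n:ℝ) * cc n * u^n with hGdef
  have hG : HasSum G (u * DD u) := by
    have h2 : HasSum (fun n : ℕ => G (n+1)) (u * DD u) := by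
      have h3 := hDD.mul_left u
      have he : (fun n : ℕ => u * (((n:ℝ)+1) * cc (n+1) * u ^ n)) = fun n : ℕ => G (n+1) := by
        funext n
        simp only [hGdef]
        push_cast
        ring
      rwa [he] at h3
    have h4 := (hasSum_nat_add_iff (f := G) 1).mp h2
    simpa [hGdef] using h4
  set H : ℕ → ℝ := fun n => if n = 0 then 0 else ((n:ℝ)-1) * cc (n-1) * u^n with hHdef
  have hH : HasSum H (u^2 * DD u) := by
    have h2 : HasSum (fun n : ℕ => H (n+1)) (u^2 * DD u) := by
      have h3 := hG.mul_left u
      have he : (fun n : ℕ => u * G n) = fun n : ℕ => H (n+1) := by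
        funext n
        simp only [hHdef, hGdef, Nat.add_sub_cancel, if_neg (Nat.succ_ne_zero n)]
        push_cast
        ring
      rw [he] at h3
      have hv : u * (u * DD u) = u^2 * DD u := by ring
      rwa [hv] at h3
    have h4 := (hasSum_nat_add_iff (f := H) 1).mp h2
    simpa [hHdef] using h4
  have combo : HasSum (fun n => (cc n * u^n - B n) + 2*(G n - H n))
      ((kk u - u * kk u) + 2*(u * DD u - u^2 * DD u)) :=
    (h1.sub hB).add ((hG.sub hH).mul_left 2)
  have hterm : (fun n => (cc n * u^n - B n) + 2*(G n - H n)) = fun n => dd n * u^n := by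
    funext n
    cases n with
    | zero => simp [hBdef, hGdef, hHdef, dd_zero, cc_zero]
    | succ m =>
      simp only [hBdef, hGdef, hHdef, Nat.add_sub_cancel, if_neg (Nat.succ_ne_zero m)]
      have h := coeff_rel m
      push_cast
      linear_combination (-(u:ℝ)^(m+1)) * h
  rw [hterm] at combo
  have := combo.tsum_eq
  unfold ee
  rw [this]
  ring

lemma kk_ge_one {u : ℝ} (h0 : 0 ≤ u) (h1 : u < 1) : 1 ≤ kk u := by
  have hu : |u| < 1 := by rwa [abs_of_nonneg h0]
  have hs := hasSum_kk hu
  have := le_hasSum hs 0 (fun n _ => mul_nonneg (cc_pos n).le (pow_nonneg h0 n))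
  simpa [cc_zero] using this

lemma kk_mono {u v : ℝ} (h0 : 0 ≤ u) (huv : u ≤ v) (h1 : v < 1) : kk u ≤ kk v := by
  have hu : |u| < 1 := by rw [abs_of_nonneg h0]; linarith
  have hv : |v| < 1 := by rw [abs_of_nonneg (le_trans h0 huv)]; linarith
  apply hasSum_le _ (hasSum_kk hu) (hasSum_kk hv)
  intro n
  apply mul_le_mul_of_nonneg_left _ (cc_pos n).le
  exact pow_le_pow_left₀ h0 huv n

lemma ee_anti {u v : ℝ} (h0 : 0 ≤ u) (huv : u ≤ v) (h1 : v < 1) : ee v ≤ ee u := by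
  have hu : |u| < 1 := by rw [abs_of_nonneg h0]; linarith
  have hv : |v| < 1 := by rw [abs_of_nonneg (le_trans h0 huv)]; linarith
  apply hasSum_le _ (hasSum_ee hv) (hasSum_ee hu)
  intro n
  cases n with
  | zero => simp
  | succ m =>
    have hdn : dd (m+1) ≤ 0 := dd_nonpos (m+1) (Nat.succ_le_succ (Nat.zero_le m))
    have : u ^ (m+1) ≤ v ^ (m+1) := pow_le_pow_left₀ h0 huv _
    nlinarith

lemma DD_nonneg {u : ℝ} (h0 : 0 ≤ u) (h1 : u < 1) : 0 ≤ DD u := by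
  have hu : |u| < 1 := by rwa [abs_of_nonneg h0]
  have hs := hasSum_DD hu
  apply hs.nonneg
  intro n
  exact mul_nonneg (mul_nonneg (by positivity) (cc_pos (n+1)).le) (pow_nonneg h0 n)

lemma ee_pos {u : ℝ} (h0 : 0 ≤ u) (h1 : u < 1) : 0 < ee u := by
  have hu : |u| < 1 := by rwa [abs_of_nonneg h0]
  rw [ee_identity hu]
  have hk := kk_ge_one h0 h1
  have hD := DD_nonneg h0 h1
  have a1 : (1-u) ≤ (1-u) * kk u := by nlinarith
  have a2 : 0 ≤ 2*u*(1-u) * DD u :=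
    mul_nonneg (mul_nonneg (by linarith) (by linarith)) hD
  linarith

noncomputable def FF (u : ℝ) : ℝ := u * (1-u) * kk u * kk (1-u)
noncomputable def FF' (u : ℝ) : ℝ :=
  (1-2*u) * kk u * kk (1-u) + u*(1-u)*(DD u * kk (1-u) - kk u * DD (1-u))

lemma hasDerivAt_FF {u : ℝ} (hu : u ∈ Set.Ioo (0:ℝ) 1) : HasDerivAt FF (FF' u) u := by
  have h1 : |u| < 1 := by rw [abs_of_nonneg hu.1.le]; exact hu.2
  have h2 : |1-u| < 1 := by rw [abs_of_nonneg (by linarith [hu.2])]; linarith [hu.1]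
  have hc : HasDerivAt (fun y : ℝ => 1 - y) (-1) u := by
    simpa using (hasDerivAt_id u).const_sub 1
  have hk := hasDerivAt_kk h1
  have hkc : HasDerivAt (fun y => kk (1-y)) (DD (1-u) * (-1)) u :=
    (hasDerivAt_kk h2).comp u hc
  have hp : HasDerivAt (fun y : ℝ => y * (1-y)) (1 - 2*u) u := by
    have := (hasDerivAt_id u).mul hc
    exact this.congr_deriv (by change 1 * (1-u) + u * (-1) = 1 - 2*u; ring)
  have total := (hp.mul hk).mul hkc
  have : FF = fun y => y * (1-y) * kk y * kk (1-y) := rfl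
  rw [this]
  exact total.congr_deriv (by unfold FF'; simp only [Pi.mul_apply]; ring)

lemma FF'_nonneg {u : ℝ} (hu : u ∈ Set.Ioo (0:ℝ) (1/2)) : 0 ≤ FF' u := by
  have hu1 : (0:ℝ) < u := hu.1
  have hu2 : u < 1/2 := hu.2
  have h1 : |u| < 1 := by rw [abs_of_nonneg hu1.le]; linarith
  have h2 : |1-u| < 1 := by rw [abs_of_nonneg (by linarith)]; linarith
  have e1 := ee_identity h1
  have e2 := ee_identity h2
  rw [show (1:ℝ)-(1-u) = u by ring] at e2
  have key : 2 * FF' u =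
      (1-2*u) * kk u * kk (1-u) + (ee u * kk (1-u) - ee (1-u) * kk u) := by
    unfold FF'
    linear_combination (kk u) * e2 - (kk (1-u)) * e1
  have hk1 : 1 ≤ kk u := kk_ge_one hu1.le (by linarith)
  have hk2 : 1 ≤ kk (1-u) := kk_ge_one (by linarith) (by linarith)
  have hkm : kk u ≤ kk (1-u) := kk_mono hu1.le (by linarith) (by linarith)
  have hee : ee (1-u) ≤ ee u := ee_anti hu1.le (by linarith) (by linarith)
  have hep : 0 < ee (1-u) := ee_pos (by linarith) (by linarith)
  have f1 : 0 ≤ (ee u - ee (1-u)) * kk (1-u) :=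
    mul_nonneg (by linarith) (by linarith)
  have f2 : 0 ≤ ee (1-u) * (kk (1-u) - kk u) :=
    mul_nonneg hep.le (by linarith)
  have f3 : 0 ≤ (1-2*u) * (kk u * kk (1-u)) :=
    mul_nonneg (by linarith) (mul_nonneg (by linarith) (by linarith))
  nlinarith [key, f1, f2, f3]

lemma FF'_nonpos {u : ℝ} (hu : u ∈ Set.Ioo (1/2:ℝ) 1) : FF' u ≤ 0 := by
  have hu1 : (1/2:ℝ) < u := hu.1
  have hu2 : u < 1 := hu.2
  have h1 : |u| < 1 := by rw [abs_of_nonneg (by linarith)]; linarith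
  have h2 : |1-u| < 1 := by rw [abs_of_nonneg (by linarith)]; linarith
  have e1 := ee_identity h1
  have e2 := ee_identity h2
  rw [show (1:ℝ)-(1-u) = u by ring] at e2
  have key : 2 * FF' u =
      (1-2*u) * kk u * kk (1-u) + (ee u * kk (1-u) - ee (1-u) * kk u) := by
    unfold FF'
    linear_combination (kk u) * e2 - (kk (1-u)) * e1
  have hk1 : 1 ≤ kk u := kk_ge_one (by linarith) (by linarith)
  have hk2 : 1 ≤ kk (1-u) := kk_ge_one (by linarith) (by linarith)
  have hkm : kk (1-u) ≤ kk u := kk_mono (by linarith) (by linarith) (by linarith)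
  have hee : ee u ≤ ee (1-u) := ee_anti (by linarith) (by linarith) (by linarith)
  have hep : 0 < ee u := ee_pos (by linarith) (by linarith)
  have f1 : (ee u - ee (1-u)) * kk u ≤ 0 :=
    mul_nonpos_of_nonpos_of_nonneg (by linarith) (by linarith)
  have f2 : ee u * (kk (1-u) - kk u) ≤ 0 :=
    mul_nonpos_of_nonneg_of_nonpos hep.le (by linarith)
  have f3 : (1-2*u) * (kk u * kk (1-u)) ≤ 0 :=
    mul_nonpos_of_nonpos_of_nonneg (by linarith) (mul_nonneg (by linarith) (by linarith))
  nlinarith [key, f1, f2, f3]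

lemma FF_mono : MonotoneOn FF (Set.Ioc (0:ℝ) (1/2)) := by
  apply monotoneOn_of_deriv_nonneg (convex_Ioc _ _)
  · intro u hu
    exact (hasDerivAt_FF ⟨hu.1, by linarith [hu.2]⟩).continuousAt.continuousWithinAt
  · rw [interior_Ioc]
    intro u hu
    exact (hasDerivAt_FF ⟨hu.1, by linarith [hu.2]⟩).differentiableAt.differentiableWithinAt
  · rw [interior_Ioc]
    intro u hu
    rw [(hasDerivAt_FF ⟨hu.1, by linarith [hu.2]⟩).deriv]
    exact FF'_nonneg hu

lemma FF_anti : AntitoneOn FF (Set.Ico (1/2:ℝ) 1) := by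
  apply antitoneOn_of_deriv_nonpos (convex_Ico _ _)
  · intro u hu
    exact (hasDerivAt_FF ⟨by linarith [hu.1], hu.2⟩).continuousAt.continuousWithinAt
  · rw [interior_Ico]
    intro u hu
    exact (hasDerivAt_FF ⟨by linarith [hu.1], hu.2⟩).differentiableAt.differentiableWithinAt
  · rw [interior_Ico]
    intro u hu
    rw [(hasDerivAt_FF ⟨by linarith [hu.1], hu.2⟩).deriv]
    exact FF'_nonpos hu

lemma hyperF_eq (t : ℝ) : hyperF (1/2) (1/2) 1 t = kk t := by
  unfold hyperF kk
  apply tsum_congr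
  intro n
  rw [ascFac_one]
  unfold cc
  rw [div_pow]
  congr 1
  have hf : ((n.factorial:ℝ)) ≠ 0 := by positivity
  field_simp

lemma ellipticK_eq (x : ℝ) : ellipticK x = Real.pi/2 * kk (x^2) := by
  unfold ellipticK; rw [hyperF_eq]

lemma Gval (x : ℝ) (h0 : 0 ≤ x) (h1 : x ≤ 1) :
    x^2*(1-x^2)*ellipticK x*ellipticK (Real.sqrt (1-x^2)) = (Real.pi/2)^2 * FF (x^2) := by
  rw [ellipticK_eq, ellipticK_eq, Real.sq_sqrt (by nlinarith)]
  unfold FF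
  ring

lemma sqrt2_sq : (1/Real.sqrt 2)^2 = 1/2 := by
  rw [div_pow, one_pow, Real.sq_sqrt (by norm_num)]

lemma sqrt2_pos : 0 < 1/Real.sqrt 2 := by positivity

lemma sqrt2_lt_one : 1/Real.sqrt 2 < 1 := by
  rw [div_lt_one (by positivity)]
  have : Real.sqrt 1 < Real.sqrt 2 := Real.sqrt_lt_sqrt (by norm_num) (by norm_num)
  simpa using this

/-- `f(x) = x²(1−x²)K(x)K(√(1−x²))` is increasing on `(0,1/√2]` and
decreasing on `[1/√2,1)`, and its maximum on `(0,1)` is `(1/4)K(1/√2)²`. -/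
theorem stmt16 :
    MonotoneOn
        (fun x => x ^ 2 * (1 - x ^ 2) * ellipticK x * ellipticK (Real.sqrt (1 - x ^ 2)))
        (Set.Ioc 0 (1 / Real.sqrt 2)) ∧
      AntitoneOn
        (fun x => x ^ 2 * (1 - x ^ 2) * ellipticK x * ellipticK (Real.sqrt (1 - x ^ 2)))
        (Set.Ico (1 / Real.sqrt 2) 1) ∧
      (∀ x ∈ Set.Ioo (0:ℝ) 1,
        x ^ 2 * (1 - x ^ 2) * ellipticK x * ellipticK (Real.sqrt (1 - x ^ 2)) ≤
          1 / 4 * ellipticK (1 / Real.sqrt 2) ^ 2) ∧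
      (1 / Real.sqrt 2) ^ 2 * (1 - (1 / Real.sqrt 2) ^ 2) * ellipticK (1 / Real.sqrt 2) *
          ellipticK (Real.sqrt (1 - (1 / Real.sqrt 2) ^ 2)) =
        1 / 4 * ellipticK (1 / Real.sqrt 2) ^ 2 := by
  have hs2 := sqrt2_sq
  have hsp := sqrt2_pos
  have hs1 := sqrt2_lt_one
  have hRHS : 1/4 * ellipticK (1/Real.sqrt 2)^2 = (Real.pi/2)^2 * FF (1/2) := by
    rw [ellipticK_eq, hs2]
    unfold FF
    ring
  refine ⟨?_, ?_, ?_, ?_⟩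
  · intro x hx y hy hxy
    dsimp only
    rw [Gval x hx.1.le (by linarith [hx.2]), Gval y hy.1.le (by linarith [hy.2])]
    apply mul_le_mul_of_nonneg_left _ (sq_nonneg _)
    apply FF_mono
    · exact ⟨pow_pos hx.1 2, by calc x^2 ≤ (1/Real.sqrt 2)^2 := pow_le_pow_left₀ hx.1.le hx.2 2
        _ = 1/2 := hs2⟩
    · exact ⟨pow_pos hy.1 2, by calc y^2 ≤ (1/Real.sqrt 2)^2 := pow_le_pow_left₀ hy.1.le hy.2 2
        _ = 1/2 := hs2⟩
    · exact pow_le_pow_left₀ hx.1.le hxy 2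
  · intro x hx y hy hxy
    dsimp only
    rw [Gval x (by linarith [hx.1]) (by linarith [hx.2]),
        Gval y (by linarith [hy.1]) (by linarith [hy.2])]
    apply mul_le_mul_of_nonneg_left _ (sq_nonneg _)
    apply FF_anti
    · refine ⟨?_, ?_⟩
      · calc (1:ℝ)/2 = (1/Real.sqrt 2)^2 := hs2.symm
          _ ≤ x^2 := pow_le_pow_left₀ hsp.le hx.1 2
      · exact pow_lt_one₀ (by linarith [hx.1]) hx.2 (by norm_num)
    · refine ⟨?_, ?_⟩
      · calc (1:ℝ)/2 = (1/Real.sqrt 2)^2 := hs2.symm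
          _ ≤ y^2 := pow_le_pow_left₀ hsp.le hy.1 2
      · exact pow_lt_one₀ (by linarith [hy.1]) hy.2 (by norm_num)
    · exact pow_le_pow_left₀ (by linarith [hx.1]) hxy 2
  · intro x hx
    rw [Gval x hx.1.le hx.2.le, hRHS]
    apply mul_le_mul_of_nonneg_left _ (sq_nonneg _)
    rcases le_or_gt (x^2) (1/2) with h | h
    · exact FF_mono ⟨pow_pos hx.1 2, h⟩ ⟨by norm_num, le_refl _⟩ h
    · exact FF_anti ⟨le_refl _, by norm_num⟩
        ⟨h.le, pow_lt_one₀ hx.1.le hx.2 (by norm_num)⟩ h.le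
  · have hsq : Real.sqrt (1 - (1/Real.sqrt 2)^2) = 1/Real.sqrt 2 := by
      rw [show (1:ℝ) - (1/Real.sqrt 2)^2 = (1/Real.sqrt 2)^2 by rw [hs2]; norm_num]
      exact Real.sqrt_sq hsp.le
    rw [hsq, hs2]
    ring
end

section
/- For all x, y ∈ (0,∞): cosh(√(xy)) ≤ √(cosh x · cosh y) ≤ cosh(√((x²+y²)/2)) ≤ (cosh x + cosh y)/2, with equality in each inequality iff x = y. -/
open Real Set

/-- `t * cosh t - sinh t` is strictly monotone on `[0, ∞)`. -/
lemma aux_mono1 : StrictMonoOn (fun t : ℝ => t * Real.cosh t - Real.sinh t) (Set.Ici 0) := by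
  apply strictMonoOn_of_deriv_pos (convex_Ici 0)
  · exact ((continuous_id.mul Real.continuous_cosh).sub Real.continuous_sinh).continuousOn
  · intro t ht
    rw [interior_Ici] at ht
    have h : HasDerivAt (fun t : ℝ => t * Real.cosh t - Real.sinh t)
        (1 * Real.cosh t + t * Real.sinh t - Real.cosh t) t :=
      ((hasDerivAt_id t).mul (Real.hasDerivAt_cosh t)).sub (Real.hasDerivAt_sinh t)
    rw [h.deriv]
    have ht' : (0:ℝ) < t := ht
    have := Real.sinh_pos_iff.2 ht'
    nlinarith [mul_pos ht' this]

lemma sinh_lt_mul_cosh {t : ℝ} (ht : 0 < t) : Real.sinh t < t * Real.cosh t := by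
  have := aux_mono1 (Set.self_mem_Ici) (Set.mem_Ici.2 ht.le) ht
  simpa using this

/-- `sinh t / t` is strictly monotone on `(0, ∞)`. -/
lemma aux_mono2 : StrictMonoOn (fun t : ℝ => Real.sinh t / t) (Set.Ioi 0) := by
  apply strictMonoOn_of_deriv_pos (convex_Ioi 0)
  · exact Real.continuous_sinh.continuousOn.div continuous_id.continuousOn
      (fun t ht => ne_of_gt ht)
  · intro t ht
    rw [interior_Ioi] at ht
    have h : HasDerivAt (fun t : ℝ => Real.sinh t / t)
        ((Real.cosh t * t - Real.sinh t * 1) / t ^ 2) t :=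
      (Real.hasDerivAt_sinh t).div (hasDerivAt_id t) (ne_of_gt ht)
    rw [h.deriv]
    have ht' : (0:ℝ) < t := ht
    have h1 := sinh_lt_mul_cosh ht'
    clear ht
    have ht := ht'
    have h2 : (0:ℝ) < t ^ 2 := by positivity
    rw [div_pos_iff]
    left
    constructor
    · nlinarith
    · exact h2

lemma psi_lt {u v : ℝ} (hu : 0 < u) (huv : u < v) :
    v * Real.sinh u < u * Real.sinh v := by
  have := aux_mono2 (Set.mem_Ioi.2 hu) (Set.mem_Ioi.2 (hu.trans huv)) huv
  simp only at this
  rw [div_lt_div_iff₀ hu (hu.trans huv)] at this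
  linarith

lemma psi_le {u v : ℝ} (hu : 0 ≤ u) (huv : u ≤ v) :
    v * Real.sinh u ≤ u * Real.sinh v := by
  rcases eq_or_lt_of_le hu with h | h
  · simp [← h]
  rcases eq_or_lt_of_le huv with h2 | h2
  · subst h2; ring_nf; exact le_refl _
  · exact (psi_lt h h2).le

/-- from `tanh` monotonicity of `tanh t / t` decreasing -/
lemma tanh_aux {a b : ℝ} (ha : 0 < a) (hab : a ≤ b) :
    a * Real.cosh a * Real.sinh b ≤ b * (Real.sinh a * Real.cosh b) := by
  have key := psi_le (u := b - a) (v := a + b) (by linarith) (by linarith)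
  rw [Real.sinh_sub, Real.sinh_add] at key
  nlinarith [key]

lemma phi_mono {s : ℝ} (hs : 0 < s) :
    StrictMonoOn (fun t : ℝ => Real.cosh (Real.sqrt (t ^ 2 + s ^ 2)) - Real.cosh t)
      (Set.Ici 0) := by
  apply strictMonoOn_of_deriv_pos (convex_Ici 0)
  · exact ((Real.continuous_cosh.comp (continuous_sqrt.comp
      ((continuous_pow 2).add continuous_const))).sub Real.continuous_cosh).continuousOn
  · intro t ht
    rw [interior_Ici] at ht
    have hw2 : (0:ℝ) < t ^ 2 + s ^ 2 := by positivity
    set w := Real.sqrt (t ^ 2 + s ^ 2) with hw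
    have hwpos : 0 < w := Real.sqrt_pos.2 hw2
    have hsq : w ^ 2 = t ^ 2 + s ^ 2 := Real.sq_sqrt hw2.le
    have hd1 : HasDerivAt (fun t : ℝ => t ^ 2 + s ^ 2) (2 * t) t := by
      simpa using ((hasDerivAt_pow 2 t).add_const (s ^ 2))
    have hd2 : HasDerivAt (fun t : ℝ => Real.sqrt (t ^ 2 + s ^ 2))
        (1 / (2 * w) * (2 * t)) t := (Real.hasDerivAt_sqrt (ne_of_gt hw2)).comp t hd1
    have hd3 : HasDerivAt (fun t : ℝ => Real.cosh (Real.sqrt (t ^ 2 + s ^ 2)) - Real.cosh t)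
        (Real.sinh w * (1 / (2 * w) * (2 * t)) - Real.sinh t) t :=
      by have h1 := (Real.hasDerivAt_cosh w).comp t hd2; exact h1.sub (Real.hasDerivAt_cosh t)
    rw [hd3.deriv]
    have htw : t < w := by nlinarith
    have key : w * Real.sinh t < t * Real.sinh w := psi_lt ht htw
    have : Real.sinh w * (1 / (2 * w) * (2 * t)) = t * Real.sinh w / w := by
      field_simp
    rw [this]
    rw [sub_pos, lt_div_iff₀ hwpos]
    linarith

/-- superadditivity-type: `cosh p + cosh s < cosh √(p²+s²) + 1` for `p, s > 0` -/
lemma coshB {p s : ℝ} (hp : 0 < p) (hs : 0 < s) :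
    Real.cosh p + Real.cosh s < Real.cosh (Real.sqrt (p ^ 2 + s ^ 2)) + 1 := by
  have := phi_mono hs (Set.self_mem_Ici) (Set.mem_Ici.2 hp.le) hp
  have h0 : (0:ℝ) ^ 2 + s ^ 2 = s ^ 2 := by ring
  simp only [h0, Real.sqrt_sq hs.le, Real.cosh_zero] at this
  linarith

lemma chi_mono {q : ℝ} (hq : 0 < q) :
    StrictMonoOn (fun t : ℝ => Real.cosh t * Real.cosh q - Real.cosh (Real.sqrt (t ^ 2 + q ^ 2)))
      (Set.Icc 0 q) := by
  apply strictMonoOn_of_deriv_pos (convex_Icc 0 q)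
  · exact ((Real.continuous_cosh.mul continuous_const).sub (Real.continuous_cosh.comp
      (continuous_sqrt.comp ((continuous_pow 2).add continuous_const)))).continuousOn
  · intro t ht
    rw [interior_Icc] at ht
    obtain ⟨ht0, htq⟩ := ht
    have hw2 : (0:ℝ) < t ^ 2 + q ^ 2 := by positivity
    set w := Real.sqrt (t ^ 2 + q ^ 2) with hw
    have hwpos : 0 < w := Real.sqrt_pos.2 hw2
    have hsq : w ^ 2 = t ^ 2 + q ^ 2 := Real.sq_sqrt hw2.le
    have hd1 : HasDerivAt (fun t : ℝ => t ^ 2 + q ^ 2) (2 * t) t := by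
      simpa using ((hasDerivAt_pow 2 t).add_const (q ^ 2))
    have hd2 : HasDerivAt (fun t : ℝ => Real.sqrt (t ^ 2 + q ^ 2))
        (1 / (2 * w) * (2 * t)) t := (Real.hasDerivAt_sqrt (ne_of_gt hw2)).comp t hd1
    have hd3 : HasDerivAt
        (fun t : ℝ => Real.cosh t * Real.cosh q - Real.cosh (Real.sqrt (t ^ 2 + q ^ 2)))
        (Real.sinh t * Real.cosh q - Real.sinh w * (1 / (2 * w) * (2 * t))) t :=
      by have h1 := (Real.hasDerivAt_cosh w).comp t hd2; exact ((Real.hasDerivAt_cosh t).mul_const _).sub h1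
    rw [hd3.deriv]
    have hwlt : w < t + q := by
      have : w ^ 2 < (t + q) ^ 2 := by nlinarith
      nlinarith
    -- t * sinh w / w < t * sinh (t+q) / (t+q)
    have h1 : (t + q) * Real.sinh w < w * Real.sinh (t + q) := psi_lt hwpos hwlt
    -- t * sinh(t+q) ≤ (t+q) * sinh t * cosh q
    have h2 : t * Real.cosh t * Real.sinh q ≤ q * (Real.sinh t * Real.cosh q) :=
      tanh_aux ht0 htq.le
    have h3 : t * Real.sinh (t + q) ≤ (t + q) * (Real.sinh t * Real.cosh q) := by
      rw [Real.sinh_add]; nlinarith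
    have : Real.sinh w * (1 / (2 * w) * (2 * t)) = t * Real.sinh w / w := by
      field_simp
    rw [this, sub_pos, div_lt_iff₀ hwpos]
    -- t * sinh w < sinh t * cosh q * w
    have htqpos : 0 < t + q := by linarith
    calc t * Real.sinh w ≤ t * Real.sinh w := le_refl _
    _ < Real.sinh t * Real.cosh q * w := by nlinarith
      
/-- submultiplicativity-type: `cosh √(q²+r²) < cosh q * cosh r` for `0 < r < q` -/
lemma coshC {q r : ℝ} (hr : 0 < r) (hrq : r < q) :
    Real.cosh (Real.sqrt (q ^ 2 + r ^ 2)) < Real.cosh q * Real.cosh r := by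
  have hq : 0 < q := hr.trans hrq
  have := chi_mono hq (Set.left_mem_Icc.2 hq.le) (Set.mem_Icc.2 ⟨hr.le, hrq.le⟩) hr
  have h0 : (0:ℝ) ^ 2 + q ^ 2 = q ^ 2 := by ring
  have hcomm : r ^ 2 + q ^ 2 = q ^ 2 + r ^ 2 := by ring
  simp only [h0, hcomm, Real.sqrt_sq hq.le, Real.cosh_zero, one_mul] at this
  rw [mul_comm]
  linarith

/-- for positive `x, y`:
`cosh√(xy) ≤ √(cosh x · cosh y) ≤ cosh√((x²+y²)/2) ≤ (cosh x + cosh y)/2`,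
with equality in each inequality iff `x = y`. -/
theorem stmt17 (x y : ℝ) (hx : 0 < x) (hy : 0 < y) :
    (Real.cosh (Real.sqrt (x * y)) ≤ Real.sqrt (Real.cosh x * Real.cosh y) ∧
      (Real.cosh (Real.sqrt (x * y)) = Real.sqrt (Real.cosh x * Real.cosh y) ↔ x = y)) ∧
    (Real.sqrt (Real.cosh x * Real.cosh y) ≤ Real.cosh (Real.sqrt ((x ^ 2 + y ^ 2) / 2)) ∧
      (Real.sqrt (Real.cosh x * Real.cosh y) = Real.cosh (Real.sqrt ((x ^ 2 + y ^ 2) / 2))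
        ↔ x = y)) ∧
    (Real.cosh (Real.sqrt ((x ^ 2 + y ^ 2) / 2)) ≤ (Real.cosh x + Real.cosh y) / 2 ∧
      (Real.cosh (Real.sqrt ((x ^ 2 + y ^ 2) / 2)) = (Real.cosh x + Real.cosh y) / 2
        ↔ x = y)) := by
  set m := Real.sqrt ((x ^ 2 + y ^ 2) / 2) with hm
  have hm2 : m ^ 2 = (x ^ 2 + y ^ 2) / 2 := Real.sq_sqrt (by positivity)
  have hmpos : 0 ≤ m := Real.sqrt_nonneg _
  have eprod : Real.cosh x * Real.cosh y
      = (Real.cosh (x + y) + Real.cosh (x - y)) / 2 := by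
    rw [Real.cosh_add, Real.cosh_sub]; ring
  -- the three strict inequalities when x ≠ y
  have sA : x ≠ y → Real.cosh (Real.sqrt (x * y)) < Real.sqrt (Real.cosh x * Real.cosh y) := by
    intro hne
    rw [Real.lt_sqrt (Real.cosh_pos _).le]
    have e1 : Real.cosh (Real.sqrt (x * y)) ^ 2
        = (Real.cosh (2 * Real.sqrt (x * y)) + 1) / 2 := by
      rw [Real.cosh_two_mul, Real.cosh_sq]; ring
    have hAM : 2 * Real.sqrt (x * y) ≤ x + y := by
      have h1 : Real.sqrt (x * y) ≤ (x + y) / 2 := by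
        rw [show (x + y) / 2 = Real.sqrt (((x + y) / 2) ^ 2) from
          (Real.sqrt_sq (by positivity)).symm]
        exact Real.sqrt_le_sqrt (by nlinarith [sq_nonneg (x - y)])
      linarith
    have h2 : Real.cosh (2 * Real.sqrt (x * y)) ≤ Real.cosh (x + y) := by
      rw [Real.cosh_le_cosh]
      rw [abs_of_nonneg (by positivity), abs_of_nonneg (by positivity)]
      exact hAM
    have h3 : 1 < Real.cosh (x - y) := Real.one_lt_cosh.2 (sub_ne_zero.2 hne)
    rw [e1, eprod]; linarith
  have sB : x ≠ y → Real.sqrt (Real.cosh x * Real.cosh y) < Real.cosh m := by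
    intro hne
    rw [Real.sqrt_lt' (Real.cosh_pos _)]
    have e1 : Real.cosh m ^ 2 = (Real.cosh (2 * m) + 1) / 2 := by
      rw [Real.cosh_two_mul, Real.cosh_sq]; ring
    have habs : 0 < |x - y| := abs_pos.2 (sub_ne_zero.2 hne)
    have h2m : 2 * m = Real.sqrt ((x + y) ^ 2 + |x - y| ^ 2) := by
      rw [← Real.sqrt_sq (show (0:ℝ) ≤ 2 * m by linarith)]
      congr 1
      rw [mul_pow, hm2, sq_abs]; ring
    have hB := coshB (show (0:ℝ) < x + y by linarith) habs
    rw [← h2m, Real.cosh_abs] at hB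
    rw [e1, eprod]; linarith
  have sC : x ≠ y → Real.cosh m < (Real.cosh x + Real.cosh y) / 2 := by
    intro hne
    have habs : 0 < |x - y| / 2 := by
      have := abs_pos.2 (sub_ne_zero.2 hne); linarith
    have hrq : |x - y| / 2 < (x + y) / 2 := by
      have h1 : |x - y| < x + y := abs_lt.2 ⟨by linarith, by linarith⟩
      linarith
    have hC := coshC habs hrq
    have hmq : Real.sqrt (((x + y) / 2) ^ 2 + (|x - y| / 2) ^ 2) = m := by
      rw [hm]; congr 1
      rw [show (|x - y| / 2) ^ 2 = (x - y) ^ 2 / 4 by rw [div_pow, sq_abs]; norm_num]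
      ring
    rw [hmq] at hC
    have hcr : Real.cosh (|x - y| / 2) = Real.cosh ((x - y) / 2) := by
      rw [show |x - y| / 2 = |(x - y) / 2| by rw [abs_div]; norm_num, Real.cosh_abs]
    rw [hcr] at hC
    have e2 : Real.cosh ((x + y) / 2) * Real.cosh ((x - y) / 2)
        = (Real.cosh x + Real.cosh y) / 2 := by
      have := Real.cosh_add ((x + y) / 2) ((x - y) / 2)
      have h2 := Real.cosh_sub ((x + y) / 2) ((x - y) / 2)
      rw [show (x + y) / 2 + (x - y) / 2 = x by ring] at this
      rw [show (x + y) / 2 - (x - y) / 2 = y by ring] at h2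
      linarith
    linarith [e2 ▸ hC]
  -- equality cases
  have eA : Real.cosh (Real.sqrt (x * x)) = Real.sqrt (Real.cosh x * Real.cosh x) := by
    rw [Real.sqrt_mul_self hx.le, Real.sqrt_mul_self (Real.cosh_pos x).le]
  have sqxx : Real.sqrt ((x ^ 2 + x ^ 2) / 2) = x := by
    rw [show (x ^ 2 + x ^ 2) / 2 = x ^ 2 by ring, Real.sqrt_sq hx.le]
  refine ⟨⟨?_, ?_, ?_⟩, ⟨?_, ?_, ?_⟩, ⟨?_, ?_, ?_⟩⟩
  · rcases eq_or_ne x y with h | h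
    · subst h; exact le_of_eq eA
    · exact (sA h).le
  · intro heq
    by_contra hne
    exact (sA hne).ne heq
  · intro h; subst h; exact eA
  · rcases eq_or_ne x y with h | h
    · subst h; rw [Real.sqrt_mul_self (Real.cosh_pos x).le, hm, sqxx]
    · exact (sB h).le
  · intro heq
    by_contra hne
    exact (sB hne).ne heq
  · intro h; subst h; rw [Real.sqrt_mul_self (Real.cosh_pos x).le, hm, sqxx]
  · rcases eq_or_ne x y with h | h
    · subst h; rw [hm, sqxx]; linarith
    · exact (sC h).le
  · intro heq
    by_contra hne
    exact (sC hne).ne heq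
  · intro h; subst h; rw [hm, sqxx]; ring
end
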